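/- Let G be a graph on n vertices with independence number α ≥ 1, and let i_k denote the number of independent sets of size k in G. Then for every 1 ≤ k ≤ α, k·i_k ≤ n·(1 − (k−1)/α)·i_{k−1}. -/

import Mathlib

open Finset MeasureTheory Real
open scoped Classical

noncomputable def indSets {V : Type*} [Fintype V] (G : SimpleGraph V) : Finset (Finset V) :=
  Finset.univ.filter (fun s => ∀ u ∈ s, ∀ v ∈ s, ¬ G.Adj u v)

/-- The independence polynomial (hard-core partition function). -/
noncomputable def indPoly {V : Type*} [Fintype V] (G : SimpleGraph V) (x : ℝ) : ℝ :=
  ∑ s ∈ indSets G, x ^ s.card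

/-- Expected size of an independent set from the hard-core model at fugacity x. -/
noncomputable def avgSize {V : Type*} [Fintype V] (G : SimpleGraph V) (x : ℝ) : ℝ :=
  x * deriv (indPoly G) x / indPoly G x

/-- Number of independent sets of size k. -/
noncomputable def numIs {V : Type*} [Fintype V] (G : SimpleGraph V) (k : ℕ) : ℕ :=
  ((indSets G).filter (fun s => s.card = k)).card

section Aux
variable {V : Type*} [Fintype V] (G : SimpleGraph V)

lemma mem_indSets {s : Finset V} : s ∈ indSets G ↔ ∀ u ∈ s, ∀ v ∈ s, ¬ G.Adj u v := by
  simp [indSets]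

lemma indSets_subset {s t : Finset V} (h : t ⊆ s) (hs : s ∈ indSets G) : t ∈ indSets G := by
  rw [mem_indSets] at *
  exact fun u hu v hv => hs u (h hu) v (h hv)

noncomputable def Ik (k : ℕ) : Finset (Finset V) := (indSets G).filter (fun s => s.card = k)

lemma numIs_eq (k : ℕ) : numIs G k = (Ik G k).card := rfl

lemma mem_Ik {k : ℕ} {s : Finset V} : s ∈ Ik G k ↔ s ∈ indSets G ∧ s.card = k := by
  simp [Ik]

noncomputable def extV (T : Finset V) : Finset V :=
  univ.filter (fun v => v ∉ T ∧ insert v T ∈ indSets G)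

lemma mem_extV {T : Finset V} {v : V} :
    v ∈ extV G T ↔ v ∉ T ∧ insert v T ∈ indSets G := by simp [extV]

lemma ind_insert2 {T : Finset V} {u v : V} (hu : insert u T ∈ indSets G)
    (hv : insert v T ∈ indSets G) (huv : ¬ G.Adj u v) :
    insert u (insert v T) ∈ indSets G := by
  rw [mem_indSets] at *
  intro a ha b hb
  simp only [mem_insert] at ha hb
  rcases ha with rfl | rfl | ha <;> rcases hb with rfl | rfl | hb
  · exact G.irrefl
  · exact huv
  · exact hu a (mem_insert_self _ _) b (mem_insert_of_mem hb)
  · exact fun h => huv h.symm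
  · exact G.irrefl
  · exact hv a (mem_insert_self _ _) b (mem_insert_of_mem hb)
  · exact hu a (mem_insert_of_mem ha) b (mem_insert_self _ _)
  · exact hv a (mem_insert_of_mem ha) b (mem_insert_self _ _)
  · exact hu a (mem_insert_of_mem ha) b (mem_insert_of_mem hb)

/-- double counting: extensions of (k)-sets are (k+1)-sets with a marked point -/
lemma sum_extV (k : ℕ) :
    ∑ T ∈ Ik G k, (extV G T).card = (k+1) * numIs G (k+1) := by
  have h1 : ∑ T ∈ Ik G k, (extV G T).card = ((Ik G k).sigma (fun T => extV G T)).card :=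
    (Finset.card_sigma _ _).symm
  have h2 : ((Ik G k).sigma (fun T => extV G T)).card
      = ((Ik G (k+1)).sigma (fun S => S)).card := by
    apply Finset.card_bij' (fun a _ => (⟨insert a.2 a.1, a.2⟩ : Σ _ : Finset V, V))
      (fun b _ => (⟨b.1.erase b.2, b.2⟩ : Σ _ : Finset V, V))
    · rintro ⟨T, v⟩ ha
      simp only [Finset.mem_sigma, mem_Ik, mem_extV] at ha ⊢
      obtain ⟨⟨hTi, hTc⟩, hvT, hins⟩ := ha
      exact ⟨⟨hins, by rw [Finset.card_insert_of_notMem hvT, hTc]⟩, mem_insert_self _ _⟩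
    · rintro ⟨S, v⟩ hb
      simp only [Finset.mem_sigma, mem_Ik, mem_extV] at hb ⊢
      obtain ⟨⟨hSi, hSc⟩, hvS⟩ := hb
      refine ⟨⟨indSets_subset G (erase_subset _ _) hSi, ?_⟩, notMem_erase _ _, ?_⟩
      · rw [Finset.card_erase_of_mem hvS, hSc]; rfl
      · rw [Finset.insert_erase hvS]; exact hSi
    · rintro ⟨T, v⟩ ha
      simp only [Finset.mem_sigma, mem_Ik, mem_extV] at ha
      simp [Finset.erase_insert ha.2.1]
    · rintro ⟨S, v⟩ hb
      simp only [Finset.mem_sigma, mem_Ik] at hb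
      simp [Finset.insert_erase hb.2]
  have h3 : ((Ik G (k+1)).sigma (fun S => S)).card = ∑ S ∈ Ik G (k+1), S.card :=
    Finset.card_sigma _ _
  rw [h1, h2, h3, numIs_eq]
  rw [Finset.sum_congr rfl (fun S hS => (mem_Ik G).1 hS |>.2), Finset.sum_const, smul_eq_mul,
    mul_comm]

/-- double counting: nonadjacent ordered pairs of distinct extensions ↔ (k+2)-sets with
two marked points -/
lemma sum_pairs2 (k : ℕ) :
    ∑ T ∈ Ik G k, ((extV G T).offDiag.filter (fun p => ¬ G.Adj p.1 p.2)).card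
      = (k+2) * ((k+1) * numIs G (k+2)) := by
  have h1 : ∑ T ∈ Ik G k, ((extV G T).offDiag.filter (fun p => ¬ G.Adj p.1 p.2)).card
      = ((Ik G k).sigma (fun T => (extV G T).offDiag.filter (fun p => ¬ G.Adj p.1 p.2))).card :=
    (Finset.card_sigma _ _).symm
  have h2 : ((Ik G k).sigma (fun T => (extV G T).offDiag.filter (fun p => ¬ G.Adj p.1 p.2))).card
      = ((Ik G (k+2)).sigma (fun S => S.offDiag)).card := by
    apply Finset.card_bij' (fun a _ => (⟨insert a.2.1 (insert a.2.2 a.1), a.2⟩ : Σ _ : Finset V, V × V))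
      (fun b _ => (⟨(b.1.erase b.2.1).erase b.2.2, b.2⟩ : Σ _ : Finset V, V × V))
    · rintro ⟨T, u, v⟩ ha
      simp only [Finset.mem_sigma, mem_Ik, Finset.mem_filter, Finset.mem_offDiag, mem_extV] at ha ⊢
      obtain ⟨⟨hTi, hTc⟩, ⟨⟨huT, hu⟩, ⟨hvT, hv⟩, huv⟩, hadj⟩ := ha
      refine ⟨⟨ind_insert2 G hu hv hadj, ?_⟩, by simp, by simp, huv⟩
      rw [Finset.card_insert_of_notMem (by simp [huv, huT]),
        Finset.card_insert_of_notMem hvT, hTc]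
    · rintro ⟨S, u, v⟩ hb
      simp only [Finset.mem_sigma, mem_Ik, Finset.mem_offDiag, Finset.mem_filter, mem_extV] at hb ⊢
      obtain ⟨⟨hSi, hSc⟩, huS, hvS, huv⟩ := hb
      have hT : (S.erase u).erase v ⊆ S := (erase_subset _ _).trans (erase_subset _ _)
      have hvs : v ∈ S.erase u := Finset.mem_erase.2 ⟨fun h => huv h.symm, hvS⟩
      refine ⟨⟨indSets_subset G hT hSi, ?_⟩, ⟨⟨?_, ?_⟩, ⟨?_, ?_⟩, huv⟩, ?_⟩
      · rw [Finset.card_erase_of_mem hvs, Finset.card_erase_of_mem huS, hSc]; rfl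
      · intro h; exact (Finset.mem_erase.1 (Finset.mem_of_mem_erase h)).1 rfl
      · have : insert u ((S.erase u).erase v) = S.erase v := by
          rw [Finset.erase_right_comm, Finset.insert_erase (Finset.mem_erase.2 ⟨huv, huS⟩)]
        rw [this]; exact indSets_subset G (erase_subset _ _) hSi
      · exact fun h => (Finset.mem_erase.1 h).1 rfl
      · rw [Finset.insert_erase hvs]; exact indSets_subset G (erase_subset _ _) hSi
      · intro h
        exact (mem_indSets G).1 hSi u huS v hvS h
    · rintro ⟨T, u, v⟩ ha
      simp only [Finset.mem_sigma, Finset.mem_filter, Finset.mem_offDiag, mem_extV] at ha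
      obtain ⟨_, ⟨⟨huT, _⟩, ⟨hvT, _⟩, huv⟩, _⟩ := ha
      have h1 : (insert u (insert v T)).erase u = insert v T :=
        Finset.erase_insert (by simp [huv, huT])
      simp [h1, Finset.erase_insert hvT]
    · rintro ⟨S, u, v⟩ hb
      simp only [Finset.mem_sigma, mem_Ik, Finset.mem_offDiag] at hb
      obtain ⟨_, huS, hvS, huv⟩ := hb
      have hvs : v ∈ S.erase u := Finset.mem_erase.2 ⟨fun h => huv h.symm, hvS⟩
      simp [Finset.insert_erase hvs, Finset.insert_erase huS]
  have h3 : ((Ik G (k+2)).sigma (fun S => S.offDiag)).card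
      = ∑ S ∈ Ik G (k+2), S.offDiag.card := Finset.card_sigma _ _
  rw [h1, h2, h3, numIs_eq]
  have : ∀ S ∈ Ik G (k+2), S.offDiag.card = (k+2) * (k+1) := by
    intro S hS
    have hc := ((mem_Ik G).1 hS).2
    rw [Finset.offDiag_card, hc]
    ring_nf
    omega
  rw [Finset.sum_congr rfl this, Finset.sum_const, smul_eq_mul]
  ring

noncomputable def bset (S : Finset V) : Finset V :=
  univ.filter (fun v => v ∉ S ∧ ∃ u ∈ S, G.Adj u v ∧ insert v (S.erase u) ∈ indSets G)

lemma mem_bset {S : Finset V} {v : V} :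
    v ∈ bset G S ↔ v ∉ S ∧ ∃ u ∈ S, G.Adj u v ∧ insert v (S.erase u) ∈ indSets G := by
  simp [bset]

/-- adjacent ordered pairs of extensions ↔ (k+1)-sets with a "1-conflict" outside vertex -/
lemma sum_pairsAdj (k : ℕ) :
    ∑ T ∈ Ik G k, ((extV G T).offDiag.filter (fun p => G.Adj p.1 p.2)).card
      = ∑ S ∈ Ik G (k+1), (bset G S).card := by
  rw [← Finset.card_sigma, ← Finset.card_sigma]
  apply Finset.card_bij (fun a _ => (⟨insert a.2.1 a.1, a.2.2⟩ : Σ _ : Finset V, V))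
  · rintro ⟨T, u, v⟩ ha
    simp only [Finset.mem_sigma, mem_Ik, Finset.mem_filter, Finset.mem_offDiag, mem_extV,
      mem_bset] at ha ⊢
    obtain ⟨⟨hTi, hTc⟩, ⟨⟨huT, hu⟩, ⟨hvT, hv⟩, huv⟩, hadj⟩ := ha
    refine ⟨⟨hu, by rw [Finset.card_insert_of_notMem huT, hTc]⟩, by simp only [Finset.mem_insert, not_or]; exact ⟨Ne.symm huv, hvT⟩, ?_⟩
    · refine ⟨u, mem_insert_self _ _, hadj, ?_⟩
      rw [Finset.erase_insert huT]
      exact hv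
  · rintro ⟨T, u, v⟩ ha ⟨T', u', v'⟩ ha' heq
    simp only [Finset.mem_sigma, mem_Ik, Finset.mem_filter, Finset.mem_offDiag, mem_extV] at ha ha'
    obtain ⟨⟨hTi, hTc⟩, ⟨⟨huT, hu⟩, ⟨hvT, hv⟩, huv⟩, hadj⟩ := ha
    obtain ⟨⟨hTi', hTc'⟩, ⟨⟨huT', hu'⟩, ⟨hvT', hv'⟩, huv'⟩, hadj'⟩ := ha'
    simp only [Sigma.mk.inj_iff, heq_eq_eq, Prod.mk.injEq] at heq ⊢
    obtain ⟨hS, hvv⟩ := heq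
    subst hvv
    -- show u = u'
    have huu : u = u' := by
      by_contra hne
      have hu'mem : u' ∈ insert u T := by rw [hS]; exact mem_insert_self _ _
      have : u' ∈ T := by
        rcases Finset.mem_insert.1 hu'mem with h | h
        · exact absurd h.symm hne
        · exact h
      exact (mem_indSets G).1 hv u' (mem_insert_of_mem this) v (mem_insert_self _ _) hadj'
    subst huu
    refine ⟨?_, rfl, rfl⟩
    have := congrArg (fun s => Finset.erase s u) hS
    simpa [Finset.erase_insert huT, Finset.erase_insert huT'] using this
  · rintro ⟨S, v⟩ hb
    simp only [Finset.mem_sigma, mem_Ik, mem_bset] at hb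
    obtain ⟨⟨hSi, hSc⟩, hvS, u, huS, hadj, hins⟩ := hb
    refine ⟨⟨S.erase u, u, v⟩, ?_, ?_⟩
    · simp only [Finset.mem_sigma, mem_Ik, Finset.mem_filter, Finset.mem_offDiag, mem_extV]
      refine ⟨⟨indSets_subset G (erase_subset _ _) hSi, by rw [Finset.card_erase_of_mem huS, hSc]; rfl⟩,
        ⟨⟨notMem_erase _ _, by rw [Finset.insert_erase huS]; exact hSi⟩,
         ⟨fun h => hvS (Finset.mem_of_mem_erase h), hins⟩, ?_⟩, hadj⟩
      exact fun h => hvS (h ▸ huS)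
    · simp [Finset.insert_erase huS]

lemma disjoint_ext_bset {S : Finset V} :
    (extV G S).card + (bset G S).card + S.card ≤ Fintype.card V := by
  have h1 : Disjoint (extV G S) (bset G S) := by
    rw [Finset.disjoint_left]
    intro v hv hv'
    rw [mem_extV] at hv
    rw [mem_bset] at hv'
    obtain ⟨u, huS, hadj, _⟩ := hv'.2
    exact (mem_indSets G).1 hv.2 u (mem_insert_of_mem huS) v (mem_insert_self _ _) hadj
  have h2 : Disjoint (extV G S ∪ bset G S) S := by
    rw [Finset.disjoint_left]
    intro v hv hvS
    rcases Finset.mem_union.1 hv with h | h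
    · exact ((mem_extV G).1 h).1 hvS
    · exact ((mem_bset G).1 h).1 hvS
  calc (extV G S).card + (bset G S).card + S.card
      = (extV G S ∪ bset G S).card + S.card := by
        rw [Finset.card_union_of_disjoint h1]
    _ = ((extV G S ∪ bset G S) ∪ S).card := (Finset.card_union_of_disjoint h2).symm
    _ ≤ Fintype.card V := by
        rw [← Finset.card_univ]; exact Finset.card_le_card (Finset.subset_univ _)

lemma moon_moser (k : ℕ) :
    (k+1)^2 * (numIs G (k+1))^2
      ≤ numIs G k * (Fintype.card V * numIs G (k+1) + (k+2)*k * numIs G (k+2)) := by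
  set n := Fintype.card V
  -- per-T decomposition of e(T)^2
  have key : ∀ T : Finset V, (extV G T).card ^ 2 = (extV G T).card
      + ((extV G T).offDiag.filter (fun p => ¬ G.Adj p.1 p.2)).card
      + ((extV G T).offDiag.filter (fun p => G.Adj p.1 p.2)).card := by
    intro T
    set e := (extV G T).card with he
    have h := Finset.card_filter_add_card_filter_not
      (s := (extV G T).offDiag) (p := fun p => G.Adj p.1 p.2)
    have h2 := Finset.offDiag_card (extV G T)
    have h3 : e ≤ e * e := by
      rcases Nat.eq_zero_or_pos e with h0 | h0
      · simp [h0]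
      · exact Nat.le_mul_of_pos_left e h0
    calc e ^ 2 = e + (e * e - e) := by rw [sq, Nat.add_sub_cancel' h3]
      _ = e + (extV G T).offDiag.card := by rw [h2]
      _ = _ := by omega
  -- sum the decomposition
  have hsum : ∑ T ∈ Ik G k, (extV G T).card ^ 2
      = (k+1) * numIs G (k+1) + (k+2) * ((k+1) * numIs G (k+2))
        + ∑ S ∈ Ik G (k+1), (bset G S).card := by
    rw [Finset.sum_congr rfl (fun T _ => key T), Finset.sum_add_distrib,
      Finset.sum_add_distrib, sum_extV, sum_pairs2, sum_pairsAdj]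
  -- per-S bound summed
  have hout : (k+2) * numIs G (k+2) + (∑ S ∈ Ik G (k+1), (bset G S).card)
      + (k+1) * numIs G (k+1) ≤ n * numIs G (k+1) := by
    have h1 : ∑ S ∈ Ik G (k+1), ((extV G S).card + (bset G S).card + (k+1))
        ≤ ∑ _S ∈ Ik G (k+1), n := by
      apply Finset.sum_le_sum
      intro S hS
      have hc : S.card = k+1 := ((mem_Ik G).1 hS).2
      calc (extV G S).card + (bset G S).card + (k+1)
          = (extV G S).card + (bset G S).card + S.card := by rw [hc]
        _ ≤ n := disjoint_ext_bset G
    rw [Finset.sum_add_distrib, Finset.sum_add_distrib, sum_extV, Finset.sum_const,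
      Finset.sum_const, smul_eq_mul, smul_eq_mul, ← numIs_eq] at h1
    calc (k+2) * numIs G (k+2) + (∑ S ∈ Ik G (k+1), (bset G S).card) + (k+1) * numIs G (k+1)
        = (k+1+1) * numIs G (k+1+1) + (∑ S ∈ Ik G (k+1), (bset G S).card)
          + numIs G (k+1) * (k+1) := by ring
      _ ≤ numIs G (k+1) * n := h1
      _ = n * numIs G (k+1) := by ring
  -- hence the second-moment bound
  have he2 : ∑ T ∈ Ik G k, (extV G T).card ^ 2
      ≤ n * numIs G (k+1) + (k+2)*k * numIs G (k+2) := by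
    have := Nat.add_le_add_left hout ((k+2)*k*numIs G (k+2))
    calc ∑ T ∈ Ik G k, (extV G T).card ^ 2
        = (k+2)*k*numIs G (k+2) + ((k+2) * numIs G (k+2)
            + (∑ S ∈ Ik G (k+1), (bset G S).card) + (k+1) * numIs G (k+1)) := by
          rw [hsum]; ring
      _ ≤ (k+2)*k*numIs G (k+2) + n * numIs G (k+1) := Nat.add_le_add_left hout _
      _ = n * numIs G (k+1) + (k+2)*k * numIs G (k+2) := by ring
  -- Cauchy--Schwarz
  have hCS : ((k+1) * numIs G (k+1))^2 ≤ numIs G k * ∑ T ∈ Ik G k, (extV G T).card ^ 2 := by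
    rw [← sum_extV G k, numIs_eq]
    exact sq_sum_le_card_mul_sum_sq
  calc (k+1)^2 * (numIs G (k+1))^2 = ((k+1) * numIs G (k+1))^2 := by ring
    _ ≤ numIs G k * ∑ T ∈ Ik G k, (extV G T).card ^ 2 := hCS
    _ ≤ numIs G k * (n * numIs G (k+1) + (k+2)*k * numIs G (k+2)) := by gcongr


lemma numIs_pos {α k : ℕ} (hα : α = (indSets G).sup Finset.card) (hk : k ≤ α) :
    0 < numIs G k := by
  have hne : (indSets G).Nonempty := ⟨∅, by simp [mem_indSets]⟩
  obtain ⟨S, hS, hSc⟩ := Finset.exists_mem_eq_sup _ hne Finset.card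
  rw [← hα] at hSc
  obtain ⟨t, hts, htc⟩ := Finset.exists_subset_card_eq (s := S) (n := k) (by omega)
  have : t ∈ Ik G k := (mem_Ik G).2 ⟨indSets_subset G hts hS, htc⟩
  rw [numIs_eq]
  exact Finset.card_pos.2 ⟨t, this⟩

lemma numIs_zero {α k : ℕ} (hα : α = (indSets G).sup Finset.card) (hk : α < k) :
    numIs G k = 0 := by
  rw [numIs_eq, Finset.card_eq_zero, Finset.eq_empty_iff_forall_notMem]
  intro s hs
  obtain ⟨hsi, hsc⟩ := (mem_Ik G).1 hs
  have : s.card ≤ α := hα ▸ Finset.le_sup hsi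
  omega

lemma main_nat {α : ℕ} (hα : α = (indSets G).sup Finset.card) :
    ∀ d k, 1 ≤ k → α + 1 ≤ k + d →
      α * (k * numIs G k) ≤ Fintype.card V * ((α + 1 - k) * numIs G (k-1)) := by
  intro d
  induction d with
  | zero =>
    intro k hk1 hkd
    rw [numIs_zero G hα (by omega)]
    simp
  | succ d IH =>
    intro k hk1 hkd
    by_cases hk : α + 1 ≤ k
    · rw [numIs_zero G hα (by omega)]; simp
    · obtain ⟨m, rfl⟩ : ∃ m, k = m + 1 := ⟨k - 1, by omega⟩
      obtain ⟨t, rfl⟩ : ∃ t, α = (m + 1) + t := ⟨α - (m+1), by omega⟩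
      have IH' := IH (m+2) (by omega) (by omega)
      have e1 : m + 1 + t + 1 - (m + 2) = t := by omega
      have e2 : m + 2 - 1 = m + 1 := by omega
      rw [e1, e2] at IH'
      have e3 : m + 1 + t + 1 - (m + 1) = t + 1 := by omega
      rw [e3]
      have hpos : 0 < numIs G (m+1) := numIs_pos G hα (by omega)
      have MM := moon_moser G m
      have hfac : 0 < (m+2) * (m+1) * numIs G (m+1) := by positivity
      apply Nat.le_of_mul_le_mul_left _ hfac
      have hc1 : (m+2) * (m+1) * numIs G (m+1) * ((m + 1 + t) * ((m + 1) * numIs G (m+1)))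
          = ((m + 1 + t) * (m+2)) * ((m+1)^2 * (numIs G (m+1))^2) := by ring
      rw [hc1]
      calc ((m + 1 + t) * (m+2)) * ((m+1)^2 * (numIs G (m+1))^2)
          ≤ ((m + 1 + t) * (m+2)) * (numIs G m *
              (Fintype.card V * numIs G (m+1) + (m+2)*m * numIs G (m+2))) := by gcongr
        _ = (m+2) * numIs G m * (Fintype.card V * numIs G (m+1)) * (m + 1 + t)
            + (m+2) * m * numIs G m * ((m + 1 + t) * ((m+2) * numIs G (m+2))) := by ring
        _ ≤ (m+2) * numIs G m * (Fintype.card V * numIs G (m+1)) * (m + 1 + t)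
            + (m+2) * m * numIs G m * (Fintype.card V * (t * numIs G (m+1))) := by gcongr
        _ = (m+2) * (m+1) * numIs G (m+1) *
            (Fintype.card V * ((t + 1) * numIs G (m + 1 - 1))) := by
              simp only [Nat.add_sub_cancel]
              ring

end Aux

theorem stmt15 {V : Type*} [Fintype V] (G : SimpleGraph V) (α : ℕ)
    (hα : α = (indSets G).sup Finset.card) (hα1 : 1 ≤ α)
    (k : ℕ) (hk1 : 1 ≤ k) (hkα : k ≤ α) :
    (k : ℝ) * numIs G k
      ≤ (Fintype.card V : ℝ) * (1 - ((k : ℝ) - 1) / α) * numIs G (k - 1) := by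
  have hnat := main_nat G hα (α + 1 - k) k hk1 (by omega)
  have hαpos : (0:ℝ) < (α:ℝ) := by exact_mod_cast hα1
  rw [← mul_le_mul_iff_right₀ hαpos]
  have hcast : ((α + 1 - k : ℕ) : ℝ) = (α:ℝ) + 1 - (k:ℝ) := by
    push_cast [Nat.cast_sub (by omega : k ≤ α + 1)]
    ring
  have h2 : (α:ℝ) * ((Fintype.card V : ℝ) * (1 - ((k:ℝ) - 1) / α) * numIs G (k-1))
      = (Fintype.card V : ℝ) * (((α + 1 - k : ℕ) : ℝ) * numIs G (k-1)) := by
    rw [hcast]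
    field_simp
    ring
  rw [h2]
  calc (α:ℝ) * ((k:ℝ) * numIs G k) = ((α * (k * numIs G k) : ℕ) : ℝ) := by push_cast; ring
    _ ≤ ((Fintype.card V * ((α + 1 - k) * numIs G (k-1)) : ℕ) : ℝ) := by exact_mod_cast hnat
    _ = (Fintype.card V : ℝ) * (((α + 1 - k : ℕ) : ℝ) * numIs G (k-1)) := by push_cast; ring
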